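/- If X ~ t_k(0, I_d) with k > 2, then for every continuously differentiable g : ℝ^d → ℝ such that (1+|x|²)^{-(k+d-2)/2} g(x) → 0 at infinity and the relevant integrals are finite, E[(X Xᵀ + k I_d) ∇g(X)] = (k-1) E[X g(X)]. -/

import Mathlib

open MeasureTheory Real Matrix Filter

/-- The gradient of `f : ℝ^d → ℝ` at `x`, as the vector of partial derivatives. -/
noncomputable def grad {d : ℕ} (f : (Fin d → ℝ) → ℝ) (x : Fin d → ℝ) : Fin d → ℝ :=
  fun i => fderiv ℝ f x (Pi.single i 1)

/-- The centered scaled multivariate Student-t density with `k` degrees of freedom. -/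
noncomputable def studentDensity₀ (d : ℕ) (k : ℝ) (x : Fin d → ℝ) : ℝ :=
  (Real.Gamma ((k + d) / 2) /
      (Real.Gamma (k / 2) * k ^ ((d : ℝ) / 2) * π ^ ((d : ℝ) / 2))) *
    (1 + dotProduct x x / k) ^ (-((k + d) / 2))

noncomputable section StudentAux

variable {d : ℕ}

/-- aux: sum of squares -/
def Ssum (d : ℕ) (x : Fin d → ℝ) : ℝ := ∑ j, x j * x j

def SD (d : ℕ) (x : Fin d → ℝ) : (Fin d → ℝ) →L[ℝ] ℝ :=
  ∑ j, (2 * x j) • ContinuousLinearMap.proj (R := ℝ) (φ := fun _ : Fin d => ℝ) j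

lemma hasFDerivAt_Ssum (x : Fin d → ℝ) : HasFDerivAt (Ssum d) (SD d x) x := by
  have h := HasFDerivAt.sum (u := Finset.univ) (fun j (_ : j ∈ Finset.univ) =>
    ((ContinuousLinearMap.proj (R := ℝ) (φ := fun _ : Fin d => ℝ) j).hasFDerivAt (x := x)).mul
      ((ContinuousLinearMap.proj (R := ℝ) (φ := fun _ : Fin d => ℝ) j).hasFDerivAt (x := x)))
  have e : SD d x = ∑ j : Fin d,
      ((ContinuousLinearMap.proj (R := ℝ) (φ := fun _ : Fin d => ℝ) j) x
          • (ContinuousLinearMap.proj (R := ℝ) (φ := fun _ : Fin d => ℝ) j)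
        + (ContinuousLinearMap.proj (R := ℝ) (φ := fun _ : Fin d => ℝ) j) x
          • (ContinuousLinearMap.proj (R := ℝ) (φ := fun _ : Fin d => ℝ) j)) := by
    ext v
    simp only [SD, ContinuousLinearMap.sum_apply, ContinuousLinearMap.add_apply,
      ContinuousLinearMap.smul_apply, ContinuousLinearMap.proj_apply, smul_eq_mul]
    refine Finset.sum_congr rfl fun j _ => by ring
  rw [e]
  exact h.congr_of_eventuallyEq (Filter.Eventually.of_forall fun y => by simp [Ssum, Finset.sum_apply])

lemma SD_apply (x : Fin d → ℝ) (j : Fin d) : SD d x (Pi.single j 1) = 2 * x j := by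
  simp [SD, Pi.single_apply, Finset.sum_ite_eq', mul_ite]

lemma Ssum_nonneg (x : Fin d → ℝ) : 0 ≤ Ssum d x :=
  Finset.sum_nonneg fun j _ => mul_self_nonneg _

lemma contDiff_Ssum : ContDiff ℝ 1 (Ssum d) := by
  apply ContDiff.sum (fun j _ => ?_)
  exact ((ContinuousLinearMap.proj (R := ℝ) (φ := fun _ : Fin d => ℝ) j).contDiff).mul
    ((ContinuousLinearMap.proj (R := ℝ) (φ := fun _ : Fin d => ℝ) j).contDiff)

lemma sq_le_Ssum (x : Fin d → ℝ) (j : Fin d) : x j * x j ≤ Ssum d x := by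
  exact Finset.single_le_sum (f := fun j => x j * x j) (fun l _ => mul_self_nonneg _)
    (Finset.mem_univ j)

end StudentAux

noncomputable section StudentAux2

variable {d : ℕ}

local notation "θ" => Real.smoothTransition

lemma deriv_smoothTransition_eq_zero {t : ℝ} (ht : t ∉ Set.Icc (0:ℝ) 1) :
    deriv θ t = 0 := by
  rw [Set.mem_Icc, not_and_or, not_le, not_le] at ht
  rcases ht with ht | ht
  · have h : θ =ᶠ[nhds t] (fun _ => (0:ℝ)) := by
      filter_upwards [Iio_mem_nhds ht] with s hs
      exact Real.smoothTransition.zero_of_nonpos (le_of_lt hs)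
    rw [h.deriv_eq, deriv_const]
  · have h : θ =ᶠ[nhds t] (fun _ => (1:ℝ)) := by
      filter_upwards [Ioi_mem_nhds ht] with s hs
      exact Real.smoothTransition.one_of_one_le (le_of_lt hs)
    rw [h.deriv_eq, deriv_const]

lemma continuous_deriv_smoothTransition : Continuous (deriv θ) :=
  (Real.smoothTransition.contDiff (n := 1)).continuous_deriv le_rfl

lemma exists_bound_deriv_smoothTransition : ∃ M : ℝ, ∀ t, |deriv θ t| ≤ M := by
  have hcs : HasCompactSupport (deriv θ) :=
    HasCompactSupport.intro isCompact_Icc fun t ht => deriv_smoothTransition_eq_zero ht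
  obtain ⟨M, hM⟩ :=
    (continuous_deriv_smoothTransition.norm).bounded_above_of_compact_support hcs.norm
  exact ⟨M, fun t => by simpa using hM t⟩

/-- integral of a partial derivative of a C¹ compactly supported function vanishes -/
lemma integral_pderiv_zero {H : (Fin d → ℝ) → ℝ} (hH : ContDiff ℝ 1 H)
    (hsupp : HasCompactSupport H) (v : Fin d → ℝ) :
    ∫ x, fderiv ℝ H x v = 0 := by
  have hHd : Differentiable ℝ H := hH.differentiable one_ne_zero
  have hfc : Continuous fun x => fderiv ℝ H x v :=
    (hH.continuous_fderiv one_ne_zero).clm_apply continuous_const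
  have hfs : HasCompactSupport fun x => fderiv ℝ H x v := by
    have := hsupp.fderiv (𝕜 := ℝ)
    exact this.comp_left (g := fun L : (Fin d → ℝ) →L[ℝ] ℝ => L v) rfl
  have h := integral_mul_fderiv_eq_neg_fderiv_mul_of_integrable
    (f := fun _ : Fin d → ℝ => (1:ℝ)) (g := H) (v := v) (μ := volume)
    ?_ ?_ ?_ (fun x _ => differentiableAt_const _) (fun x _ => hHd x)
  · simpa using h
  · simp [fderiv_const]
  · simpa using hfc.integrable_of_hasCompactSupport hfs
  · simpa using (hH.continuous).integrable_of_hasCompactSupport hsupp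

end StudentAux2

noncomputable section StudentAux3

variable {d : ℕ} {k c e0 : ℝ} {g : (Fin d → ℝ) → ℝ}

def qfun (d : ℕ) (k : ℝ) (x : Fin d → ℝ) : ℝ := 1 + k⁻¹ * Ssum d x

def pfun (d : ℕ) (k c e0 : ℝ) (x : Fin d → ℝ) : ℝ := c * qfun d k x ^ (-e0)

def PD (d : ℕ) (k c e0 : ℝ) (x : Fin d → ℝ) : (Fin d → ℝ) →L[ℝ] ℝ :=
  c • ((-e0 * qfun d k x ^ (-e0 - 1)) • (k⁻¹ • SD d x))

lemma qfun_pos (hk0 : 0 < k) (x : Fin d → ℝ) : 0 < qfun d k x := by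
  have h := Ssum_nonneg x
  have : (0:ℝ) ≤ k⁻¹ * Ssum d x := by positivity
  unfold qfun; linarith

lemma hasFDerivAt_qfun (hk0 : 0 < k) (x : Fin d → ℝ) :
    HasFDerivAt (qfun d k) (k⁻¹ • SD d x) x :=
  ((hasFDerivAt_Ssum x).const_mul k⁻¹).const_add 1

lemma hasFDerivAt_pfun (hk0 : 0 < k) (x : Fin d → ℝ) :
    HasFDerivAt (pfun d k c e0) (PD d k c e0 x) x := by
  exact (((hasFDerivAt_qfun hk0 x).rpow_const
    (Or.inl (qfun_pos hk0 x).ne')).const_mul c)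

lemma PD_apply (x : Fin d → ℝ) (j : Fin d) :
    PD d k c e0 x (Pi.single j 1) =
      c * (-e0 * qfun d k x ^ (-e0 - 1)) * (k⁻¹ * (2 * x j)) := by
  simp [PD, SD_apply, mul_assoc]

lemma contDiff_qfun : ContDiff ℝ 1 (qfun d k) :=
  contDiff_const.add (contDiff_const.mul contDiff_Ssum)

lemma contDiff_pfun (hk0 : 0 < k) : ContDiff ℝ 1 (pfun d k c e0) := by
  rw [contDiff_iff_contDiffAt]
  intro x
  exact contDiffAt_const.mul
    ((Real.contDiffAt_rpow_const_of_ne (qfun_pos hk0 x).ne').comp x contDiff_qfun.contDiffAt)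

lemma continuous_pfun (hk0 : 0 < k) : Continuous (pfun d k c e0) :=
  (contDiff_pfun hk0).continuous

end StudentAux3

noncomputable section StudentAux4

variable {d : ℕ} {k c e0 : ℝ} {g : (Fin d → ℝ) → ℝ}

def Afun (d : ℕ) (k : ℝ) (i j : Fin d) (x : Fin d → ℝ) : ℝ :=
  x i * x j + k * (if i = j then 1 else 0)

def Ffun (d : ℕ) (k c e0 : ℝ) (i : Fin d) (g : (Fin d → ℝ) → ℝ) (j : Fin d)
    (x : Fin d → ℝ) : ℝ :=
  Afun d k i j x * (g x * pfun d k c e0 x)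

def FD (d : ℕ) (k c e0 : ℝ) (i : Fin d) (g : (Fin d → ℝ) → ℝ) (j : Fin d)
    (x : Fin d → ℝ) : (Fin d → ℝ) →L[ℝ] ℝ :=
  Afun d k i j x • (g x • PD d k c e0 x + pfun d k c e0 x • fderiv ℝ g x)
    + (g x * pfun d k c e0 x) •
      (x i • ContinuousLinearMap.proj (R := ℝ) (φ := fun _ : Fin d => ℝ) j
        + x j • ContinuousLinearMap.proj (R := ℝ) (φ := fun _ : Fin d => ℝ) i)

lemma hasFDerivAt_Ffun (hk0 : 0 < k) (hg : Differentiable ℝ g) (i j : Fin d)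
    (x : Fin d → ℝ) : HasFDerivAt (Ffun d k c e0 i g j) (FD d k c e0 i g j x) x := by
  have hA : HasFDerivAt (fun y : Fin d → ℝ => y i * y j + k * (if i = j then (1:ℝ) else 0))
      (x i • ContinuousLinearMap.proj (R := ℝ) (φ := fun _ : Fin d => ℝ) j
        + x j • ContinuousLinearMap.proj (R := ℝ) (φ := fun _ : Fin d => ℝ) i) x :=
    (((ContinuousLinearMap.proj (R := ℝ) (φ := fun _ : Fin d => ℝ) i).hasFDerivAt (x := x)).mul
        ((ContinuousLinearMap.proj (R := ℝ) (φ := fun _ : Fin d => ℝ) j).hasFDerivAt (x := x))).add_const _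
  have hG : HasFDerivAt (fun y => g y * pfun d k c e0 y)
      (g x • PD d k c e0 x + pfun d k c e0 x • fderiv ℝ g x) x :=
    (hg x).hasFDerivAt.mul (hasFDerivAt_pfun hk0 x)
  exact hA.mul hG

lemma div_sum (hk0 : 0 < k) (he0 : 2 * e0 = k + d) (i : Fin d) (x : Fin d → ℝ) :
    ∑ j, FD d k c e0 i g j x (Pi.single j 1)
      = (∑ j, Afun d k i j x * fderiv ℝ g x (Pi.single j 1)) * pfun d k c e0 x
        + (1 - k) * (x i * g x * pfun d k c e0 x) := by
  have hq0 := qfun_pos (d := d) hk0 x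
  have hI : k⁻¹ * k = 1 := inv_mul_cancel₀ hk0.ne'
  have hu : qfun d k x ^ (-e0 - 1) * qfun d k x = qfun d k x ^ (-e0) := by
    rw [← Real.rpow_add_one hq0.ne']
    norm_num
  have hS : Ssum d x = k * qfun d k x - k := by
    unfold qfun; field_simp; ring
  have step1 : ∑ j, FD d k c e0 i g j x (Pi.single j 1)
      = ∑ j, (pfun d k c e0 x * (Afun d k i j x * fderiv ℝ g x (Pi.single j 1))
        + ((g x * (c * (-e0 * qfun d k x ^ (-e0 - 1)) * k⁻¹ * 2))
              * (Afun d k i j x * x j)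
        + ((g x * pfun d k c e0 x) * x i
        + (g x * pfun d k c e0 x) * ((if i = j then (1:ℝ) else 0) * x j)))) := by
    refine Finset.sum_congr rfl fun j _ => ?_
    simp only [FD, ContinuousLinearMap.add_apply, ContinuousLinearMap.smul_apply,
      ContinuousLinearMap.proj_apply, smul_eq_mul, PD_apply, Pi.single_eq_same,
      Pi.single_apply]
    ring
  rw [step1]
  simp only [Finset.sum_add_distrib]
  have h1 : ∑ j, (g x * pfun d k c e0 x) * ((if i = j then (1:ℝ) else 0) * x j)
      = g x * pfun d k c e0 x * x i := by
    rw [← Finset.mul_sum]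
    congr 1
    simp [Finset.sum_ite_eq]
  have h2 : ∑ j, (g x * (c * (-e0 * qfun d k x ^ (-e0 - 1)) * k⁻¹ * 2))
        * (Afun d k i j x * x j)
      = (g x * (c * (-e0 * qfun d k x ^ (-e0 - 1)) * k⁻¹ * 2))
        * (x i * Ssum d x + k * x i) := by
    rw [← Finset.mul_sum]
    congr 1
    have : ∀ j : Fin d, Afun d k i j x * x j
        = x i * (x j * x j) + k * ((if i = j then (1:ℝ) else 0) * x j) := by
      intro j; unfold Afun; ring
    rw [Finset.sum_congr rfl fun j _ => this j, Finset.sum_add_distrib, ← Finset.mul_sum,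
      ← Finset.mul_sum]
    have : ∑ j, (if i = j then (1:ℝ) else 0) * x j = x i := by
      simp [Finset.sum_ite_eq]
    rw [this]
    simp [Ssum]
  have h3 : ∑ _j : Fin d, (g x * pfun d k c e0 x) * x i
      = (d : ℝ) * (g x * pfun d k c e0 x * x i) := by
    rw [Finset.sum_const, Finset.card_univ, Fintype.card_fin, nsmul_eq_mul]
  rw [h1, h2, h3, ← Finset.mul_sum, hS]
  unfold pfun
  linear_combination ((-2*e0*(g x)*c*(x i)) * (k⁻¹*k)) * hu
    + ((-2*e0*(g x)*c*(x i)) * (qfun d k x ^ (-e0))) * hI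
    + (-(g x)*c*(qfun d k x ^ (-e0))*(x i)) * he0

end StudentAux4

noncomputable section StudentAux5

variable {d : ℕ} {R : ℝ}

local notation "θ" => Real.smoothTransition

def chiCut (d : ℕ) (R : ℝ) (x : Fin d → ℝ) : ℝ := θ (2 - R⁻¹ * Ssum d x)

def chiD (d : ℕ) (R : ℝ) (x : Fin d → ℝ) : (Fin d → ℝ) →L[ℝ] ℝ :=
  deriv θ (2 - R⁻¹ * Ssum d x) • (-(R⁻¹ • SD d x))

lemma hasFDerivAt_chiCut (x : Fin d → ℝ) :
    HasFDerivAt (chiCut d R) (chiD d R x) x := by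
  have hinner : HasFDerivAt (fun y : Fin d → ℝ => 2 - R⁻¹ * Ssum d y)
      (-(R⁻¹ • SD d x)) x := ((hasFDerivAt_Ssum x).const_mul R⁻¹).const_sub 2
  have hθ : HasDerivAt θ (deriv θ (2 - R⁻¹ * Ssum d x)) (2 - R⁻¹ * Ssum d x) :=
    (((Real.smoothTransition.contDiff (n := 1)).differentiable (by norm_num)) _).hasDerivAt
  exact hθ.comp_hasFDerivAt x hinner

lemma chiD_apply (x : Fin d → ℝ) (j : Fin d) :
    chiD d R x (Pi.single j 1)
      = -(deriv θ (2 - R⁻¹ * Ssum d x) * R⁻¹ * (2 * x j)) := by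
  simp [chiD, SD_apply]
  ring

lemma contDiff_chiCut : ContDiff ℝ 1 (chiCut d R) :=
  Real.smoothTransition.contDiff.comp
    (contDiff_const.sub (contDiff_const.mul contDiff_Ssum))

lemma chiCut_le_one (x : Fin d → ℝ) : |chiCut d R x| ≤ 1 := by
  rw [abs_le]
  exact ⟨le_trans (by norm_num) (Real.smoothTransition.nonneg _),
    Real.smoothTransition.le_one _⟩

lemma chiCut_eq_one (hR : 0 < R) {x : Fin d → ℝ} (h : Ssum d x ≤ R) :
    chiCut d R x = 1 := by
  apply Real.smoothTransition.one_of_one_le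
  have : R⁻¹ * Ssum d x ≤ 1 := by
    rw [inv_mul_le_iff₀ hR]
    linarith
  linarith

lemma chiCut_deriv_eq_zero_of_lt (hR : 0 < R) {x : Fin d → ℝ} (h : Ssum d x < R) :
    deriv θ (2 - R⁻¹ * Ssum d x) = 0 := by
  apply deriv_smoothTransition_eq_zero
  rw [Set.mem_Icc, not_and_or]
  right
  rw [not_le]
  have : R⁻¹ * Ssum d x < 1 := by
    rw [inv_mul_lt_iff₀ hR]
    linarith
  linarith

lemma chiCut_deriv_eq_zero_of_gt (hR : 0 < R) {x : Fin d → ℝ} (h : 2 * R < Ssum d x) :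
    deriv θ (2 - R⁻¹ * Ssum d x) = 0 := by
  apply deriv_smoothTransition_eq_zero
  rw [Set.mem_Icc, not_and_or]
  left
  rw [not_le]
  have : 2 < R⁻¹ * Ssum d x := by
    rw [lt_inv_mul_iff₀ hR]
    linarith
  linarith

lemma norm_le_sqrt_Ssum (x : Fin d → ℝ) : ‖x‖ ≤ Real.sqrt (Ssum d x) := by
  rw [pi_norm_le_iff_of_nonneg (Real.sqrt_nonneg _)]
  intro j
  rw [Real.norm_eq_abs, ← Real.sqrt_mul_self_eq_abs]
  exact Real.sqrt_le_sqrt (sq_le_Ssum x j)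

lemma hasCompactSupport_chiCut (hR : 0 < R) : HasCompactSupport (chiCut d R) := by
  apply HasCompactSupport.intro (isCompact_closedBall (0 : Fin d → ℝ) (Real.sqrt (2 * R)))
  intro x hx
  rw [Metric.mem_closedBall, dist_zero_right, not_le] at hx
  have h2R : 2 * R < Ssum d x := by
    by_contra hcon
    rw [not_lt] at hcon
    have := (norm_le_sqrt_Ssum x).trans (Real.sqrt_le_sqrt hcon)
    linarith
  apply Real.smoothTransition.zero_of_nonpos
  have : 2 < R⁻¹ * Ssum d x := by
    rw [lt_inv_mul_iff₀ hR]
    linarith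
  linarith

end StudentAux5

noncomputable section StudentAux6
variable {d : ℕ} {k c e0 : ℝ} {g : (Fin d → ℝ) → ℝ}

lemma contDiff_Ffun (hk0 : 0 < k) (hg : ContDiff ℝ 1 g) (i j : Fin d) :
    ContDiff ℝ 1 (Ffun d k c e0 i g j) := by
  unfold Ffun Afun
  exact ((((ContinuousLinearMap.proj (R := ℝ) (φ := fun _ : Fin d => ℝ) i).contDiff).mul
    ((ContinuousLinearMap.proj (R := ℝ) (φ := fun _ : Fin d => ℝ) j).contDiff)).add
    contDiff_const).mul (hg.mul (contDiff_pfun hk0))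

lemma abs_mul_le_Ssum (x : Fin d → ℝ) (i j : Fin d) : |x i * x j| ≤ Ssum d x := by
  have h1 := sq_le_Ssum x i
  have h2 := sq_le_Ssum x j
  rw [abs_mul]
  nlinarith [sq_nonneg (|x i| - |x j|), abs_mul_abs_self (x i), abs_mul_abs_self (x j),
    abs_nonneg (x i), abs_nonneg (x j)]

end StudentAux6


/-- For `X ~ t_k(0, I_d)` with `k > 2` and `g` continuously differentiable such that
`(1+|x|²)^{-(k+d-2)/2} g(x) → 0` at infinity and the relevant integrals are finite,
`E[(X Xᵀ + k I_d) ∇g(X)] = (k-1) E[X g(X)]`. -/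
theorem student_stein_identity (d : ℕ) (hd : 1 ≤ d) (k : ℝ) (hk : 2 < k)
    (g : (Fin d → ℝ) → ℝ) (hg : ContDiff ℝ 1 g)
    (hdecay : Tendsto (fun x : Fin d → ℝ =>
        (1 + ∑ j, x j ^ 2) ^ (-((k + d - 2) / 2)) * g x) (cocompact _) (nhds 0))
    (hint₁ : ∀ i, Integrable (fun x =>
      ((Matrix.vecMulVec x x + k • (1 : Matrix (Fin d) (Fin d) ℝ)).mulVec (grad g x)) i *
        studentDensity₀ d k x))
    (hint₂ : ∀ i, Integrable (fun x => x i * g x * studentDensity₀ d k x)) :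
    ∀ i, ∫ x,
        ((Matrix.vecMulVec x x + k • (1 : Matrix (Fin d) (Fin d) ℝ)).mulVec (grad g x)) i *
          studentDensity₀ d k x
      = (k - 1) * ∫ x, x i * g x * studentDensity₀ d k x := by
  intro i
  have hk0 : (0:ℝ) < k := by linarith
  have hgd : Differentiable ℝ g := hg.differentiable one_ne_zero
  set c : ℝ := Real.Gamma ((k + ↑d) / 2) /
      (Real.Gamma (k / 2) * k ^ ((d : ℝ) / 2) * π ^ ((d : ℝ) / 2)) with hc
  set e0 : ℝ := (k + ↑d) / 2 with he0def
  have he0 : 2 * e0 = k + d := by rw [he0def]; ring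
  have hp_eq : ∀ x : Fin d → ℝ, studentDensity₀ d k x = pfun d k c e0 x := by
    intro x
    simp only [studentDensity₀, pfun, qfun, Ssum, ← hc, ← he0def, dotProduct]
    rw [div_eq_inv_mul]
  have hmv : ∀ x : Fin d → ℝ,
      ((Matrix.vecMulVec x x + k • (1 : Matrix (Fin d) (Fin d) ℝ)).mulVec (grad g x)) i
        = ∑ j, Afun d k i j x * fderiv ℝ g x (Pi.single j 1) := by
    intro x
    simp [Matrix.mulVec, dotProduct, Afun, grad, Matrix.add_apply,
      Matrix.vecMulVec_apply, Matrix.smul_apply, Matrix.one_apply, smul_eq_mul]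
  -- the divergence function
  set D : (Fin d → ℝ) → ℝ := fun x =>
    (∑ j, Afun d k i j x * fderiv ℝ g x (Pi.single j 1)) * pfun d k c e0 x
      + (1 - k) * (x i * g x * pfun d k c e0 x) with hDdef
  have hI1 : Integrable (fun x =>
      (∑ j, Afun d k i j x * fderiv ℝ g x (Pi.single j 1)) * pfun d k c e0 x) := by
    refine (hint₁ i).congr (Filter.Eventually.of_forall fun x => ?_)
    simp only [hmv, hp_eq]
  have hI2 : ∀ j, Integrable (fun x => x j * g x * pfun d k c e0 x) := by
    intro j
    refine (hint₂ j).congr (Filter.Eventually.of_forall fun x => ?_)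
    simp only [hp_eq]
  have hD : Integrable D := hI1.add ((hI2 i).const_mul (1 - k))
  obtain ⟨M, hM⟩ := exists_bound_deriv_smoothTransition
  have hM0 : 0 ≤ M := le_trans (abs_nonneg _) (hM 0)
  set R : ℕ → ℝ := fun n => ((n:ℝ) + 1) ^ 2 with hRdef
  have hR : ∀ n, 0 < R n := fun n => by positivity
  have hR1 : ∀ n, 1 ≤ R n := fun n => by
    simp only [hRdef]
    nlinarith [Nat.cast_nonneg (α := ℝ) n]
  -- continuity facts
  have hgc : Continuous fun x => fderiv ℝ g x :=
    hg.continuous_fderiv one_ne_zero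
  have hAc : ∀ j : Fin d, Continuous (fun x : Fin d → ℝ => Afun d k i j x) := fun j =>
    ((continuous_apply i).mul (continuous_apply j)).add continuous_const
  have hDc : Continuous D := by
    refine (Continuous.mul ?_ (continuous_pfun hk0)).add
      ((continuous_const.mul (((continuous_apply i).mul (hg.continuous)).mul
        (continuous_pfun hk0))))
    exact continuous_finset_sum _ fun j _ => (hAc j).mul (hgc.clm_apply continuous_const)
  have hFc : ∀ j, Continuous (Ffun d k c e0 i g j) := fun j =>
    (contDiff_Ffun hk0 hg i j).continuous
  -- the cut-off integrals vanish
  have key : ∀ n : ℕ, ∫ x, (chiCut d (R n) x * D x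
      + ∑ j, Ffun d k c e0 i g j x * chiD d (R n) x (Pi.single j 1)) = 0 := by
    intro n
    have hct : ∀ j : Fin d, ContDiff ℝ 1 (fun y => chiCut d (R n) y * Ffun d k c e0 i g j y) :=
      fun j => contDiff_chiCut.mul (contDiff_Ffun hk0 hg i j)
    have hcs : ∀ j : Fin d, HasCompactSupport
        (fun y => chiCut d (R n) y * Ffun d k c e0 i g j y) :=
      fun j => (hasCompactSupport_chiCut (hR n)).mul_right
    have hfd : ∀ (x : Fin d → ℝ) (j : Fin d),
        fderiv ℝ (fun y => chiCut d (R n) y * Ffun d k c e0 i g j y) x (Pi.single j 1)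
          = chiCut d (R n) x * (FD d k c e0 i g j x (Pi.single j 1))
            + Ffun d k c e0 i g j x * (chiD d (R n) x (Pi.single j 1)) := by
      intro x j
      have hF : HasFDerivAt (fun y => chiCut d (R n) y * Ffun d k c e0 i g j y) _ x :=
        (hasFDerivAt_chiCut x).mul (hasFDerivAt_Ffun hk0 hgd i j x)
      rw [hF.fderiv]
      simp
    have hptwise : ∀ x : Fin d → ℝ,
        chiCut d (R n) x * D x
            + ∑ j, Ffun d k c e0 i g j x * chiD d (R n) x (Pi.single j 1)
          = ∑ j, fderiv ℝ (fun y => chiCut d (R n) y * Ffun d k c e0 i g j y) x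
              (Pi.single j 1) := by
      intro x
      have hds := div_sum (g := g) (c := c) (e0 := e0) hk0 he0 i x
      simp only [hDdef]
      rw [← hds, Finset.mul_sum, ← Finset.sum_add_distrib]
      exact Finset.sum_congr rfl fun j _ => (hfd x j).symm
    rw [integral_congr_ae (Filter.Eventually.of_forall hptwise)]
    rw [integral_finset_sum]
    · exact Finset.sum_eq_zero fun j _ => integral_pderiv_zero (hct j) (hcs j) _
    · intro j _
      refine Continuous.integrable_of_hasCompactSupport ?_ ?_
      · exact ((hct j).continuous_fderiv one_ne_zero).clm_apply continuous_const
      · exact ((hcs j).fderiv (𝕜 := ℝ)).comp_left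
          (g := fun L : (Fin d → ℝ) →L[ℝ] ℝ => L (Pi.single j 1)) rfl
  -- continuity of the cut-off integrands
  have hcross_cont : ∀ n : ℕ, Continuous (fun x => chiCut d (R n) x * D x
      + ∑ j, Ffun d k c e0 i g j x * chiD d (R n) x (Pi.single j 1)) := by
    intro n
    refine ((contDiff_chiCut.continuous).mul hDc).add ?_
    refine continuous_finset_sum _ fun j _ => (hFc j).mul ?_
    have hrw : (fun x => chiD d (R n) x (Pi.single j 1))
        = fun x => -(deriv Real.smoothTransition (2 - (R n)⁻¹ * Ssum d x) * (R n)⁻¹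
            * (2 * x j)) := by
      funext x; rw [chiD_apply]
    rw [hrw]
    exact (((continuous_deriv_smoothTransition.comp (continuous_const.sub
      (continuous_const.mul contDiff_Ssum.continuous))).mul continuous_const).mul
      (continuous_const.mul (continuous_apply j))).neg
  set Cst : ℝ := M * (2 * (2 + k)) with hCst
  set B : (Fin d → ℝ) → ℝ :=
    fun x => |D x| + Cst * ∑ j, |x j * g x * pfun d k c e0 x| with hBdef
  have hBint : Integrable B :=
    hD.abs.add ((integrable_finset_sum Finset.univ (fun j _ => (hI2 j).abs)).const_mul Cst)
  have hbound : ∀ n : ℕ, ∀ x : Fin d → ℝ,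
      ‖chiCut d (R n) x * D x
        + ∑ j, Ffun d k c e0 i g j x * chiD d (R n) x (Pi.single j 1)‖ ≤ B x := by
    intro n x
    rw [Real.norm_eq_abs]
    refine (abs_add_le _ _).trans ?_
    have h1 : |chiCut d (R n) x * D x| ≤ |D x| := by
      rw [abs_mul]
      exact mul_le_of_le_one_left (abs_nonneg _) (chiCut_le_one x)
    have h2 : |∑ j, Ffun d k c e0 i g j x * chiD d (R n) x (Pi.single j 1)|
        ≤ Cst * ∑ j, |x j * g x * pfun d k c e0 x| := by
      refine (Finset.abs_sum_le_sum_abs _ _).trans ?_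
      rw [Finset.mul_sum]
      refine Finset.sum_le_sum fun j _ => ?_
      rw [chiD_apply]
      rcases lt_or_ge (2 * R n) (Ssum d x) with hcase | hcase
      · rw [chiCut_deriv_eq_zero_of_gt (hR n) hcase]
        simp only [zero_mul, mul_zero, neg_zero, abs_zero]
        positivity
      · have hAb : |Afun d k i j x| ≤ (2 + k) * R n := by
          have h1' := abs_mul_le_Ssum x i j
          have hite : |k * (if i = j then (1:ℝ) else 0)| ≤ k := by
            rcases eq_or_ne i j with h | h <;>
              simp [h, abs_of_nonneg hk0.le, hk0.le]
          have h3 : |Afun d k i j x| ≤ |x i * x j| + |k * (if i = j then (1:ℝ) else 0)| :=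
            abs_add_le _ _
          have hRn1 := hR1 n
          nlinarith
        have hθb := hM (2 - (R n)⁻¹ * Ssum d x)
        show |Ffun d k c e0 i g j x
            * -(deriv Real.smoothTransition (2 - (R n)⁻¹ * Ssum d x) * (R n)⁻¹ * (2 * x j))|
          ≤ Cst * |x j * g x * pfun d k c e0 x|
        unfold Ffun
        rw [abs_mul, abs_neg, abs_mul, abs_mul, abs_mul, abs_mul, abs_mul,
          abs_of_pos (inv_pos.2 (hR n)), abs_two]
        calc |Afun d k i j x| * (|g x| * |pfun d k c e0 x|)
              * (|deriv Real.smoothTransition (2 - (R n)⁻¹ * Ssum d x)| * (R n)⁻¹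
                * (2 * |x j|))
            ≤ ((2 + k) * R n) * (|g x| * |pfun d k c e0 x|) * (M * (R n)⁻¹ * (2 * |x j|)) := by
              gcongr <;> positivity
          _ = Cst * (|x j| * |g x| * |pfun d k c e0 x|) := by
              rw [hCst]
              have hRR : R n * (R n)⁻¹ = 1 := mul_inv_cancel₀ (hR n).ne'
              linear_combination ((2 + k) * (|g x| * |pfun d k c e0 x|) * M * 2 * |x j|) * hRR
          _ = Cst * |x j * g x * pfun d k c e0 x| := by
              simp [abs_mul, mul_assoc]
    calc |chiCut d (R n) x * D x|
          + |∑ j, Ffun d k c e0 i g j x * chiD d (R n) x (Pi.single j 1)|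
        ≤ |D x| + Cst * ∑ j, |x j * g x * pfun d k c e0 x| := add_le_add h1 h2
      _ = B x := by rw [hBdef]
  have hlim : ∀ x : Fin d → ℝ, Tendsto (fun n : ℕ => chiCut d (R n) x * D x
      + ∑ j, Ffun d k c e0 i g j x * chiD d (R n) x (Pi.single j 1)) atTop (nhds (D x)) := by
    intro x
    have hev : ∀ᶠ n : ℕ in atTop, (chiCut d (R n) x * D x
        + ∑ j, Ffun d k c e0 i g j x * chiD d (R n) x (Pi.single j 1)) = D x := by
      filter_upwards [eventually_ge_atTop (⌈Ssum d x⌉₊)] with n hn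
      have hlt : Ssum d x < R n := by
        have ha : Ssum d x ≤ ((⌈Ssum d x⌉₊ : ℕ) : ℝ) := Nat.le_ceil _
        have hb : (((⌈Ssum d x⌉₊ : ℕ)) : ℝ) ≤ (n : ℝ) := Nat.cast_le.2 hn
        simp only [hRdef]
        nlinarith [Nat.cast_nonneg (α := ℝ) n]
      rw [chiCut_eq_one (hR n) hlt.le]
      have hz : ∀ j : Fin d, chiD d (R n) x (Pi.single j 1) = 0 := by
        intro j
        rw [chiD_apply, chiCut_deriv_eq_zero_of_lt (hR n) hlt]
        ring
      simp [hz]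
    exact Tendsto.congr' (by filter_upwards [hev] with n h using h.symm) tendsto_const_nhds
  have hDCT := tendsto_integral_of_dominated_convergence (μ := volume)
    (F := fun n : ℕ => fun x => chiCut d (R n) x * D x
      + ∑ j, Ffun d k c e0 i g j x * chiD d (R n) x (Pi.single j 1))
    (f := D) B (fun n => (hcross_cont n).aestronglyMeasurable) hBint
    (fun n => Filter.Eventually.of_forall (hbound n))
    (Filter.Eventually.of_forall hlim)
  have hInt0 : ∫ x, D x = 0 := by
    have h0 := hDCT
    simp only [key] at h0
    exact tendsto_nhds_unique h0 tendsto_const_nhds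
  have e1 : ∫ x, ((Matrix.vecMulVec x x + k • (1 : Matrix (Fin d) (Fin d) ℝ)).mulVec
        (grad g x)) i * studentDensity₀ d k x
      = ∫ x, (∑ j, Afun d k i j x * fderiv ℝ g x (Pi.single j 1)) * pfun d k c e0 x := by
    refine integral_congr_ae (Filter.Eventually.of_forall fun x => ?_)
    simp only [hmv, hp_eq]
  have e2 : ∫ x, x i * g x * studentDensity₀ d k x = ∫ x, x i * g x * pfun d k c e0 x :=
    integral_congr_ae (Filter.Eventually.of_forall fun x => by simp only [hp_eq])
  have hsplit : ∫ x, D x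
      = (∫ x, (∑ j, Afun d k i j x * fderiv ℝ g x (Pi.single j 1)) * pfun d k c e0 x)
        + (1 - k) * ∫ x, x i * g x * pfun d k c e0 x := by
    simp only [hDdef]
    rw [integral_add hI1 ((hI2 i).const_mul (1 - k)), integral_const_mul]
  rw [e1, e2]
  rw [hsplit] at hInt0
  linarith
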